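/- Let 𝕊 be a quantum system with structured states over a finite set N of locations, ↝ a policy, (read, alter) an access control matrix satisfying ↝, and ε ≥ 0. Suppose that for all agents b ∈ A, commands c ∈ C, reachable density operators ρ, σ, and all K ⊆ N, (RM2) if Dis(ρ, 𝓔_{b,c}(ρ) | ε, K) or Dis(σ, 𝓔_{b,c}(σ) | ε, K) then ¬Dis(𝓔_{b,c}(ρ), 𝓔_{b,c}(σ) | δ_b(ρ,σ), K), and (RM3) if Dis(ρ, 𝓔_{b,c}(ρ) | ε, K) then there exists L ∈ alter(b) with K ∩ L ≠ ∅. Then for all a, b ∈ A, c ∈ C and reachable ρ, σ: δ_a(𝓔_{b,c}(ρ), 𝓔_{b,c}(σ)) ≤ δ_a(ρ,σ) + 2ε. -/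

import Mathlib

open scoped Classical ComplexOrder
open Matrix Kronecker

noncomputable section

/-- A density operator: positive semidefinite with trace 1. -/
def IsDensity {d : Type} [Fintype d] [DecidableEq d] (ρ : Matrix d d ℂ) : Prop :=
  ρ.PosSemidef ∧ ρ.trace = 1

/-- A super-operator: a linear, positive, trace-preserving map on matrices. -/
def IsSuperOp {d : Type} [Fintype d] [DecidableEq d]
    (F : Matrix d d ℂ → Matrix d d ℂ) : Prop :=
  IsLinearMap ℂ F ∧ (∀ ρ : Matrix d d ℂ, ρ.PosSemidef → (F ρ).PosSemidef) ∧
    (∀ ρ : Matrix d d ℂ, (F ρ).trace = ρ.trace)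

/-- A finite family of matrices (the data of a measurement). -/
structure PMeas (d : Type) where
  m : ℕ
  E : Fin m → Matrix d d ℂ

/-- The family is a POVM: positive semidefinite elements summing to the identity. -/
def PMeas.IsPOVM {d : Type} [Fintype d] [DecidableEq d] (P : PMeas d) : Prop :=
  (∀ i, (P.E i).PosSemidef) ∧ ∑ i, P.E i = 1

/-- The distance between outcome distributions of a measurement on two states. -/
def dE {d : Type} [Fintype d] (P : PMeas d) (ρ σ : Matrix d d ℂ) : ℝ :=
  (1 / 2) * ∑ i, ‖(P.E i * ρ).trace - (P.E i * σ).trace‖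

/-- The measurement pseudo-distance induced by a set of measurements. -/
def dM {d : Type} [Fintype d] (M : Set (PMeas d)) (ρ σ : Matrix d d ℂ) : ℝ :=
  sSup { x | ∃ P ∈ M, x = dE P ρ σ }

/-- A quantum system: initial state, agents, commands, super-operators, measurements. -/
structure QSystem (Agent Cmd d : Type) where
  ρ0 : Matrix d d ℂ
  A : Set Agent
  C : Set Cmd
  Ecmd : Agent → Cmd → Matrix d d ℂ → Matrix d d ℂ
  M : Agent → Set (PMeas d)

/-- Well-formedness: the initial state is a density operator, commands act as
super-operators, and agents measure with POVMs. -/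
def QSystem.WellFormed {Agent Cmd d : Type} [Fintype d] [DecidableEq d]
    (S : QSystem Agent Cmd d) : Prop :=
  IsDensity S.ρ0 ∧ (∀ a ∈ S.A, ∀ c ∈ S.C, IsSuperOp (S.Ecmd a c)) ∧
    (∀ a ∈ S.A, ∀ P ∈ S.M a, P.IsPOVM)

/-- Execution of a finite action sequence (composition of super-operators, in order). -/
def QSystem.run {Agent Cmd d : Type} (S : QSystem Agent Cmd d)
    (α : List (Agent × Cmd)) (ρ : Matrix d d ℂ) : Matrix d d ℂ :=
  α.foldl (fun τ p => S.Ecmd p.1 p.2 τ) ρ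

/-- A sequence over A × C. -/
def QSystem.Valid {Agent Cmd d : Type} (S : QSystem Agent Cmd d)
    (α : List (Agent × Cmd)) : Prop :=
  ∀ p ∈ α, p.1 ∈ S.A ∧ p.2 ∈ S.C

/-- `purge G D α` deletes from `α` every pair `(a, c)` with `a ∈ G` and `c ∈ D`. -/
def purge {Agent Cmd : Type} (G : Set Agent) (D : Set Cmd) :
    List (Agent × Cmd) → List (Agent × Cmd)
  | [] => []
  | p :: rest => if p.1 ∈ G ∧ p.2 ∈ D then purge G D rest else p :: purge G D rest

/-- A reachable density operator. -/
def QSystem.Reachable {Agent Cmd d : Type} (S : QSystem Agent Cmd d)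
    (ρ : Matrix d d ℂ) : Prop :=
  ∃ α, S.Valid α ∧ S.run α S.ρ0 = ρ

/-- `∇ a`: the set of agents from which information may not flow to `a`. -/
def nabla {Agent : Type} (pol : Agent → Agent → Prop) (a : Agent) : Set Agent :=
  { b | ¬ pol b a }

/-- The security degree `K(𝕊,↝)`. -/
def Kdeg {Agent Cmd d : Type} [Fintype d] (S : QSystem Agent Cmd d)
    (pol : Agent → Agent → Prop) : ℝ :=
  sSup { x | ∃ a ∈ S.A, ∃ α, S.Valid α ∧
    x = dM (S.M a) (S.run α S.ρ0) (S.run (purge (nabla pol a) Set.univ α) S.ρ0) }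

/-- The `t`-bounded security degree `K_t(𝕊,↝)`. -/
def Kt {Agent Cmd d : Type} [Fintype d] (S : QSystem Agent Cmd d)
    (pol : Agent → Agent → Prop) (t : ℕ) : ℝ :=
  sSup { x | ∃ a ∈ S.A, ∃ α, S.Valid α ∧ α.length ≤ t ∧
    x = dM (S.M a) (S.run α S.ρ0) (S.run (purge (nabla pol a) Set.univ α) S.ρ0) }

/-- The interference degree `Int(G₁, D | G₂)`. -/
def IntDeg {Agent Cmd d : Type} [Fintype d] (S : QSystem Agent Cmd d)
    (G1 : Set Agent) (D : Set Cmd) (G2 : Set Agent) : ℝ :=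
  sSup { x | ∃ a ∈ G2, ∃ α, S.Valid α ∧
    x = dM (S.M a) (S.run α S.ρ0) (S.run (purge G1 D α) S.ρ0) }

/-- Trace distance `d(ρ,σ) = (1/2)·tr √((ρ−σ)†(ρ−σ))`. -/
def traceDist {d : Type} [Fintype d] [DecidableEq d] (ρ σ : Matrix d d ℂ) : ℝ :=
  (1 / 2) * (((Matrix.posSemidef_conjTranspose_mul_self (ρ - σ)).1.eigenvectorUnitary.1 *
    Matrix.diagonal (((↑) : ℝ → ℂ) ∘ Real.sqrt ∘ (Matrix.posSemidef_conjTranspose_mul_self (ρ - σ)).1.eigenvalues) *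
    (star (Matrix.posSemidef_conjTranspose_mul_self (ρ - σ)).1.eigenvectorUnitary.1 : Matrix d d ℂ)).trace).re


end
noncomputable section

variable {N : Type} [Fintype N] [DecidableEq N] {ι : N → Type}
  [∀ n, Fintype (ι n)] [∀ n, DecidableEq (ι n)]

/-- Glue an assignment on `K` and an assignment on `Kᶜ` into a global assignment. -/
def glue (K : Finset N) (u : (n : K) → ι n.1) (w : (n : (Kᶜ : Finset N)) → ι n.1) :
    (n : N) → ι n :=
  fun n => if h : n ∈ K then u ⟨n, h⟩ else w ⟨n, Finset.mem_compl.mpr h⟩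

/-- Partial trace `tr_{N∖K}`: trace out the locations outside `K`. -/
def ptrOut (K : Finset N) (ρ : Matrix ((n : N) → ι n) ((n : N) → ι n) ℂ) :
    Matrix ((n : K) → ι n.1) ((n : K) → ι n.1) ℂ :=
  Matrix.of fun u v =>
    ∑ w : (n : (Kᶜ : Finset N)) → ι n.1, ρ (glue K u w) (glue K v w)

/-- A below-closed family of sets of locations. -/
def BelowClosed {N : Type} (B : Set (Finset N)) : Prop :=
  ∀ K ∈ B, ∀ L ⊆ K, L ∈ B

/-- The pseudo-distance `δ_a(ρ,σ) = sup_{K ∈ read(a)} d(tr_{N∖K}(ρ), tr_{N∖K}(σ))`. -/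
def deltaRead {Agent : Type} (read : Agent → Set (Finset N)) (a : Agent)
    (ρ σ : Matrix ((n : N) → ι n) ((n : N) → ι n) ℂ) : ℝ :=
  sSup { x | ∃ K ∈ read a, x = traceDist (ptrOut K ρ) (ptrOut K σ) }

/-- `Dis(ρ,σ | ε, K)`: `ρ` and `σ` are `ε`-discriminable on `K`. -/
def Dis (K : Finset N) (ε : ℝ)
    (ρ σ : Matrix ((n : N) → ι n) ((n : N) → ι n) ℂ) : Prop :=
  traceDist (ptrOut K ρ) (ptrOut K σ) > ε

/-- The access control matrix `(read, alter)` satisfies the policy `↝`. -/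
def ACMSatisfies {Agent N : Type} (A : Set Agent) (pol : Agent → Agent → Prop)
    (read alter : Agent → Set (Finset N)) : Prop :=
  (∀ a ∈ A, ∀ b ∈ A, pol a b → read a ⊆ read b) ∧
  (∀ a ∈ A, ∀ b ∈ A, (∃ K ∈ read a, ∃ L ∈ alter b, (K ∩ L).Nonempty) → pol b a)

end
noncomputable section

namespace AuxQ
variable {n : Type} [Fintype n] [DecidableEq n]

open scoped MatrixOrder

/-- the explicit square root used in `traceDist` -/
def psqrt {A : Matrix n n ℂ} (hA : A.PosSemidef) : Matrix n n ℂ :=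
  hA.1.eigenvectorUnitary.1 *
    Matrix.diagonal (((↑) : ℝ → ℂ) ∘ Real.sqrt ∘ hA.1.eigenvalues) *
    (star hA.1.eigenvectorUnitary.1 : Matrix n n ℂ)

lemma traceDist_eq (ρ σ : Matrix n n ℂ) : traceDist ρ σ =
    (1 / 2) * ((psqrt (Matrix.posSemidef_conjTranspose_mul_self (ρ - σ))).trace).re := rfl

lemma psqrt_eq_cfc {A : Matrix n n ℂ} (hA : A.PosSemidef) : psqrt hA = CFC.sqrt A := by
  rw [CFC.sqrt_eq_cfc, cfc_nnreal_eq_real _ A, hA.1.cfc_eq]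
  simp only [IsHermitian.cfc, psqrt, Unitary.conjStarAlgAut_apply]
  congr 3
  funext i
  simp [Real.coe_toNNReal', max_eq_left (hA.eigenvalues_nonneg i)]

lemma psqrt_posSemidef {A : Matrix n n ℂ} (hA : A.PosSemidef) : (psqrt hA).PosSemidef := by
  rw [psqrt_eq_cfc]; exact (CFC.sqrt_nonneg A).posSemidef

lemma eq_psqrt_of_sq_eq {A B : Matrix n n ℂ} (hB : B.PosSemidef) (hA : A.PosSemidef)
    (h : B ^ 2 = A) : B = psqrt hA := by
  rw [psqrt_eq_cfc]
  exact (CFC.sqrt_unique (by rw [← sq]; exact h) hB.nonneg).symm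

lemma sqrt_congr {A B : Matrix n n ℂ} (h : A = B) (hA : A.PosSemidef) (hB : B.PosSemidef) :
    psqrt hA = psqrt hB := by subst h; rfl

lemma trace_re_nonneg {M : Matrix n n ℂ} (hM : M.PosSemidef) : 0 ≤ M.trace.re := by
  have h := hM.1.spectral_theorem
  rw [h, Unitary.conjStarAlgAut_apply, Matrix.trace_mul_cycle,
    (Matrix.mem_unitaryGroup_iff').mp (hM.1.eigenvectorUnitary).2, one_mul, Matrix.trace_diagonal]
  rw [Complex.re_sum]
  exact Finset.sum_nonneg fun i _ => by simpa using hM.eigenvalues_nonneg i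

lemma conj_mul_conj {U D E : Matrix n n ℂ} (hU1 : star U * U = 1) :
    (U * D * star U) * (U * E * star U) = U * (D * E) * star U := by
  have h : ∀ X : Matrix n n ℂ, star U * (U * X) = X := by
    intro X; rw [← mul_assoc, hU1, one_mul]
  simp only [mul_assoc, h]

/-- nuclear norm of a Hermitian matrix equals the sum of abs of eigenvalues -/
lemma trace_sqrt_eq {A : Matrix n n ℂ} (hA : A.IsHermitian) :
    ((psqrt (Matrix.posSemidef_conjTranspose_mul_self A)).trace).re = ∑ i, |hA.eigenvalues i| := by
  set U : Matrix n n ℂ := (hA.eigenvectorUnitary : Matrix n n ℂ) with hU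
  have hU1 : star U * U = 1 := (Matrix.mem_unitaryGroup_iff').mp (hA.eigenvectorUnitary).2
  set B : Matrix n n ℂ := U * diagonal ((↑) ∘ (fun i => |hA.eigenvalues i|)) * star U with hB
  have hDpsd : Matrix.PosSemidef (diagonal ((↑) ∘ (fun i => |hA.eigenvalues i|)) : Matrix n n ℂ) := by
    refine Matrix.PosSemidef.diagonal fun i => ?_
    simpa using Complex.ofReal_nonneg.mpr (abs_nonneg _)
  have hBpsd : B.PosSemidef := by
    simpa [hB, Matrix.star_eq_conjTranspose] using hDpsd.mul_mul_conjTranspose_same U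
  have hAA : Aᴴ * A = U * (diagonal (RCLike.ofReal ∘ hA.eigenvalues) *
      diagonal (RCLike.ofReal ∘ hA.eigenvalues)) * star U := by
    conv_lhs => rw [hA.eq, hA.spectral_theorem, Unitary.conjStarAlgAut_apply]
    exact conj_mul_conj hU1
  have hsq : B ^ 2 = Aᴴ * A := by
    rw [pow_two, hB, conj_mul_conj hU1, hAA, Matrix.diagonal_mul_diagonal,
      Matrix.diagonal_mul_diagonal]
    have hfun : (fun i => (Complex.ofReal ∘ fun i => |hA.eigenvalues i|) i *
        (Complex.ofReal ∘ fun i => |hA.eigenvalues i|) i) =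
        (fun i => (RCLike.ofReal ∘ hA.eigenvalues) i * (RCLike.ofReal ∘ hA.eigenvalues) i) := by
      funext i
      show (Complex.ofReal |hA.eigenvalues i|) * (Complex.ofReal |hA.eigenvalues i|) =
        (Complex.ofReal (hA.eigenvalues i)) * (Complex.ofReal (hA.eigenvalues i))
      rw [← Complex.ofReal_mul, ← Complex.ofReal_mul, abs_mul_abs_self]
    rw [hfun]
  have heq : B = psqrt (Matrix.posSemidef_conjTranspose_mul_self A) :=
    eq_psqrt_of_sq_eq hBpsd _ hsq
  rw [← heq, hB, Matrix.trace_mul_cycle, hU1, one_mul, Matrix.trace_diagonal]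
  rw [Complex.re_sum]
  simp

lemma diag_abs_le {A : Matrix n n ℂ} (hA : A.IsHermitian) (V : Matrix n n ℂ)
    (hV1 : star V * V = 1) (hV2 : V * star V = 1) :
    ∑ j, ‖(star V * A * V) j j‖ ≤ ∑ i, |hA.eigenvalues i| := by
  set U : Matrix n n ℂ := (hA.eigenvectorUnitary : Matrix n n ℂ) with hU
  have hU1 : star U * U = 1 := (Matrix.mem_unitaryGroup_iff').mp (hA.eigenvectorUnitary).2
  set M : Matrix n n ℂ := star V * U with hM
  have hMs : star M = star U * V := by rw [hM, Matrix.star_mul, star_star]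
  have hMM : star M * M = 1 := by
    rw [hMs, hM, mul_assoc, ← mul_assoc V, hV2, one_mul, hU1]
  have hrepr : star V * A * V = M * diagonal (RCLike.ofReal ∘ hA.eigenvalues) * star M := by
    rw [hMs, hM]
    conv_lhs => rw [hA.spectral_theorem, Unitary.conjStarAlgAut_apply]
    simp only [mul_assoc]
    rfl
  have hcol : ∀ i, ∑ j, Complex.normSq (M j i) = 1 := by
    intro i
    have h1 : (star M * M) i i = 1 := by rw [hMM]; simp [Matrix.one_apply]
    rw [Matrix.mul_apply] at h1
    have h2 : ∀ j, (star M) i j * M j i = (Complex.normSq (M j i) : ℂ) := by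
      intro j
      rw [Matrix.star_apply, Complex.normSq_eq_conj_mul_self]
      rfl
    rw [Finset.sum_congr rfl (fun j _ => h2 j)] at h1
    have h3 := congrArg Complex.re h1
    rw [Complex.re_sum] at h3
    simpa using h3
  calc ∑ j, ‖(star V * A * V) j j‖
      ≤ ∑ j, ∑ i, |hA.eigenvalues i| * Complex.normSq (M j i) := by
        refine Finset.sum_le_sum fun j _ => ?_
        rw [hrepr]
        set X : Matrix n n ℂ := M * diagonal (RCLike.ofReal ∘ hA.eigenvalues) * star M with hX
        have hjj : X j j
            = ∑ i, M j i * (hA.eigenvalues i : ℂ) * star (M j i) := by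
          rw [hX, Matrix.mul_apply]
          refine Finset.sum_congr rfl fun i _ => ?_
          rw [Matrix.mul_diagonal, Matrix.star_apply]
          rfl
        rw [hjj]
        refine le_trans (norm_sum_le _ _) (Finset.sum_le_sum fun i _ => ?_)
        rw [norm_mul, norm_mul, Complex.norm_real, Real.norm_eq_abs, Complex.star_def, Complex.norm_conj, ← Complex.sq_norm]
        refine le_of_eq (by ring)
    _ = ∑ i, |hA.eigenvalues i| * ∑ j, Complex.normSq (M j i) := by
        rw [Finset.sum_comm]
        simp [Finset.mul_sum]
    _ = ∑ i, |hA.eigenvalues i| := by simp [hcol]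

lemma nuclear_triangle {X Y : Matrix n n ℂ} (hX : X.IsHermitian) (hY : Y.IsHermitian) :
    ((psqrt (Matrix.posSemidef_conjTranspose_mul_self (X + Y))).trace).re ≤
    ((psqrt (Matrix.posSemidef_conjTranspose_mul_self X)).trace).re +
    ((psqrt (Matrix.posSemidef_conjTranspose_mul_self Y)).trace).re := by
  have hZ : (X + Y).IsHermitian := hX.add hY
  rw [trace_sqrt_eq hZ, trace_sqrt_eq hX, trace_sqrt_eq hY]
  set U : Matrix n n ℂ := (hZ.eigenvectorUnitary : Matrix n n ℂ) with hU
  have hU1 : star U * U = 1 := (Matrix.mem_unitaryGroup_iff').mp (hZ.eigenvectorUnitary).2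
  have hU2 : U * star U = 1 := (Matrix.mem_unitaryGroup_iff).mp (hZ.eigenvectorUnitary).2
  have hdiag : star U * (X + Y) * U = diagonal (RCLike.ofReal ∘ hZ.eigenvalues) := by
    conv_lhs => rw [hZ.spectral_theorem, Unitary.conjStarAlgAut_apply]
    change star U * (U * diagonal (RCLike.ofReal ∘ hZ.eigenvalues) * star U) * U = _
    simp only [mul_assoc]
    rw [hU1, mul_one, ← mul_assoc, hU1, one_mul]
  have h1 : ∀ j, |hZ.eigenvalues j| = ‖(star U * (X + Y) * U) j j‖ := by
    intro j
    rw [hdiag]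
    simp [Matrix.diagonal_apply_eq]
  calc ∑ j, |hZ.eigenvalues j|
      = ∑ j, ‖(star U * X * U + star U * Y * U) j j‖ := by
        refine Finset.sum_congr rfl fun j _ => ?_
        rw [h1 j]
        congr 2
        noncomm_ring
    _ ≤ ∑ j, (‖(star U * X * U) j j‖ + ‖(star U * Y * U) j j‖) := by
        refine Finset.sum_le_sum fun j _ => ?_
        simpa [Matrix.add_apply] using norm_add_le _ _
    _ = (∑ j, ‖(star U * X * U) j j‖) + ∑ j, ‖(star U * Y * U) j j‖ :=
        Finset.sum_add_distrib
    _ ≤ _ := add_le_add (diag_abs_le hX U hU1 hU2) (diag_abs_le hY U hU1 hU2)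

lemma traceDist_nonneg (ρ σ : Matrix n n ℂ) : 0 ≤ traceDist ρ σ :=
  mul_nonneg (by norm_num)
    (trace_re_nonneg (psqrt_posSemidef (Matrix.posSemidef_conjTranspose_mul_self _)))

lemma traceDist_symm (ρ σ : Matrix n n ℂ) : traceDist ρ σ = traceDist σ ρ := by
  simp only [traceDist_eq]
  rw [sqrt_congr (show (ρ - σ)ᴴ * (ρ - σ) = (σ - ρ)ᴴ * (σ - ρ) by
      rw [show σ - ρ = -(ρ - σ) by abel, Matrix.conjTranspose_neg, Matrix.neg_mul,
        Matrix.mul_neg, neg_neg])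
    (Matrix.posSemidef_conjTranspose_mul_self _) (Matrix.posSemidef_conjTranspose_mul_self _)]

lemma traceDist_triangle {A B C : Matrix n n ℂ} (h1 : (A - B).IsHermitian)
    (h2 : (B - C).IsHermitian) :
    traceDist A C ≤ traceDist A B + traceDist B C := by
  simp only [traceDist_eq]
  have key := nuclear_triangle h1 h2
  rw [sqrt_congr (show (A - C)ᴴ * (A - C) = ((A - B) + (B - C))ᴴ * ((A - B) + (B - C)) by
      rw [show (A - B) + (B - C) = A - C by abel])
    (Matrix.posSemidef_conjTranspose_mul_self _) (Matrix.posSemidef_conjTranspose_mul_self _)]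
  linarith

lemma ptrOut_isHermitian {N : Type} [Fintype N] [DecidableEq N] {ι : N → Type}
    [∀ n, Fintype (ι n)] [∀ n, DecidableEq (ι n)] (K : Finset N)
    {ρ : Matrix ((n : N) → ι n) ((n : N) → ι n) ℂ} (h : ρ.IsHermitian) :
    (ptrOut K ρ).IsHermitian := by
  ext u v
  simp only [Matrix.conjTranspose_apply, ptrOut, Matrix.of_apply, star_sum]
  refine Finset.sum_congr rfl fun w _ => ?_
  rw [← Matrix.conjTranspose_apply, h.eq]

lemma run_posSemidef {Agent Cmd d : Type} [Fintype d] [DecidableEq d]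
    {S : QSystem Agent Cmd d} (hS : S.WellFormed) :
    ∀ (α : List (Agent × Cmd)), S.Valid α → ∀ ρ : Matrix d d ℂ, ρ.PosSemidef →
      (S.run α ρ).PosSemidef := by
  intro α
  induction α with
  | nil => exact fun _ ρ hρ => hρ
  | cons p l ih =>
      intro hv ρ hρ
      have hp := hv p List.mem_cons_self
      have hl : S.Valid l := fun q hq => hv q (List.mem_cons_of_mem p hq)
      exact ih hl _ ((hS.2.1 p.1 hp.1 p.2 hp.2).2.1 ρ hρ)

lemma reachable_posSemidef {Agent Cmd d : Type} [Fintype d] [DecidableEq d]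
    {S : QSystem Agent Cmd d} (hS : S.WellFormed) {ρ : Matrix d d ℂ}
    (h : S.Reachable ρ) : ρ.PosSemidef := by
  obtain ⟨α, hα, rfl⟩ := h
  exact run_posSemidef hS α hα S.ρ0 hS.1.1

end AuxQ

/-- **Claim 1 in the proof of the access control theorem.** Under (RM2) and (RM3),
`δ_a(𝓔_{b,c}(ρ), 𝓔_{b,c}(σ)) ≤ δ_a(ρ,σ) + 2ε` for all agents `a, b ∈ A`, commands
`c ∈ C` and reachable `ρ, σ`. -/
theorem access_control_step_consistency {Agent Cmd N : Type} [Fintype N] [DecidableEq N]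
    {ι : N → Type} [∀ n, Fintype (ι n)] [∀ n, DecidableEq (ι n)]
    [∀ n, Nonempty (ι n)]
    (S : QSystem Agent Cmd ((n : N) → ι n)) (hS : S.WellFormed)
    (pol : Agent → Agent → Prop) (hpol : ∀ a ∈ S.A, pol a a)
    (read alter : Agent → Set (Finset N))
    (hread : ∀ a ∈ S.A, BelowClosed (read a))
    (halter : ∀ a ∈ S.A, BelowClosed (alter a))
    (hacm : ACMSatisfies S.A pol read alter)
    (ε : ℝ) (hε : 0 ≤ ε)
    (RM2 : ∀ b ∈ S.A, ∀ c ∈ S.C, ∀ ρ σ, S.Reachable ρ → S.Reachable σ →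
      ∀ K : Finset N,
        (Dis K ε ρ (S.Ecmd b c ρ) ∨ Dis K ε σ (S.Ecmd b c σ)) →
        ¬ Dis K (deltaRead read b ρ σ) (S.Ecmd b c ρ) (S.Ecmd b c σ))
    (RM3 : ∀ b ∈ S.A, ∀ c ∈ S.C, ∀ ρ, S.Reachable ρ → ∀ K : Finset N,
      Dis K ε ρ (S.Ecmd b c ρ) → ∃ L ∈ alter b, (K ∩ L).Nonempty) :
    ∀ a ∈ S.A, ∀ b ∈ S.A, ∀ c ∈ S.C, ∀ ρ σ, S.Reachable ρ → S.Reachable σ →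
      deltaRead read a (S.Ecmd b c ρ) (S.Ecmd b c σ) ≤ deltaRead read a ρ σ + 2 * ε := by
  intro a ha b hb c hc ρ σ hρ hσ
  have hρp := AuxQ.reachable_posSemidef hS hρ
  have hσp := AuxQ.reachable_posSemidef hS hσ
  have hsup : IsSuperOp (S.Ecmd b c) := hS.2.1 b hb c hc
  have hEρp : (S.Ecmd b c ρ).PosSemidef := hsup.2.1 ρ hρp
  have hEσp : (S.Ecmd b c σ).PosSemidef := hsup.2.1 σ hσp
  have hbdd : ∀ (g : Agent) (x y : Matrix ((n : N) → ι n) ((n : N) → ι n) ℂ),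
      BddAbove {r : ℝ | ∃ K ∈ read g, r = traceDist (ptrOut K x) (ptrOut K y)} := by
    intro g x y
    have he : {r : ℝ | ∃ K ∈ read g, r = traceDist (ptrOut K x) (ptrOut K y)}
        = (fun K => traceDist (ptrOut K x) (ptrOut K y)) '' (read g) := by
      ext r
      constructor
      · rintro ⟨K, hK, rfl⟩; exact ⟨K, hK, rfl⟩
      · rintro ⟨K, hK, rfl⟩; exact ⟨K, hK, rfl⟩
    rw [he]
    exact ((Set.toFinite (read g)).image _).bddAbove
  have hnn : ∀ (g : Agent) (x y : Matrix ((n : N) → ι n) ((n : N) → ι n) ℂ),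
      0 ≤ deltaRead read g x y := by
    intro g x y
    refine Real.sSup_nonneg ?_
    rintro r ⟨K, hK, rfl⟩
    exact AuxQ.traceDist_nonneg _ _
  have hdnn : 0 ≤ deltaRead read a ρ σ := hnn a ρ σ
  refine Real.sSup_le ?_ (by linarith)
  rintro x ⟨K, hK, rfl⟩
  by_cases hcase : Dis K ε ρ (S.Ecmd b c ρ) ∨ Dis K ε σ (S.Ecmd b c σ)
  · have hub := RM2 b hb c hc ρ σ hρ hσ K hcase
    simp only [Dis, gt_iff_lt, not_lt] at hub
    obtain ⟨L, hL, hne⟩ := hcase.elim (fun h => RM3 b hb c hc ρ hρ K h)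
      (fun h => RM3 b hb c hc σ hσ K h)
    have hKL : K ∩ L ∈ read a := hread a ha K hK (K ∩ L) Finset.inter_subset_left
    have hpolba : pol b a := hacm.2 a ha b hb ⟨K ∩ L, hKL, L, hL, by
      have hne2 : ((K ∩ L) ∩ L).Nonempty := by
        obtain ⟨x, hx⟩ := hne
        have hxL : x ∈ L := (Finset.mem_inter.mp hx).2
        exact ⟨x, Finset.mem_inter.mpr ⟨hx, hxL⟩⟩
      convert hne2 using 2
      congr 1
      exact Subsingleton.elim _ _⟩
    have hsub := hacm.1 b hb a ha hpolba
    have h2 : deltaRead read b ρ σ ≤ deltaRead read a ρ σ := by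
      refine Real.sSup_le ?_ hdnn
      rintro r ⟨K', hK', rfl⟩
      exact le_csSup (hbdd a ρ σ) ⟨K', hsub hK', rfl⟩
    have h3 : traceDist (ptrOut K ρ) (ptrOut K σ) ≥ 0 := AuxQ.traceDist_nonneg _ _
    have h2ε : 0 ≤ 2 * ε := by linarith
    calc traceDist (ptrOut K (S.Ecmd b c ρ)) (ptrOut K (S.Ecmd b c σ))
        ≤ deltaRead read b ρ σ := hub
      _ ≤ deltaRead read a ρ σ := h2
      _ ≤ deltaRead read a ρ σ + 2 * ε := by linarith
  · push_neg at hcase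
    obtain ⟨hc1, hc2⟩ := hcase
    simp only [Dis, gt_iff_lt, not_lt] at hc1 hc2
    have H1 : (ptrOut K ρ).IsHermitian := AuxQ.ptrOut_isHermitian K hρp.1
    have H2 : (ptrOut K σ).IsHermitian := AuxQ.ptrOut_isHermitian K hσp.1
    have H3 : (ptrOut K (S.Ecmd b c ρ)).IsHermitian := AuxQ.ptrOut_isHermitian K hEρp.1
    have H4 : (ptrOut K (S.Ecmd b c σ)).IsHermitian := AuxQ.ptrOut_isHermitian K hEσp.1
    have t1 := AuxQ.traceDist_triangle (H3.sub H1) (H1.sub H4)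
    have t2 := AuxQ.traceDist_triangle (H1.sub H2) (H2.sub H4)
    have hsymm : traceDist (ptrOut K (S.Ecmd b c ρ)) (ptrOut K ρ)
        = traceDist (ptrOut K ρ) (ptrOut K (S.Ecmd b c ρ)) := AuxQ.traceDist_symm _ _
    have hd : traceDist (ptrOut K ρ) (ptrOut K σ) ≤ deltaRead read a ρ σ :=
      le_csSup (hbdd a ρ σ) ⟨K, hK, rfl⟩
    rw [hsymm] at t1
    linarith


end
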